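/- arXiv:2209.03925 — 2 statements merged into one kernel-verified Lean document; each statement's English description precedes it below -/
import Mathlib

section
/- Let s be a nonempty score sequence of length n and let 1 ≤ j ≤ n-1. Define s+j as the nondecreasing rearrangement of the entries s_i + j reduced modulo n. Then s+j is a score sequence if and only if there exist score sequences u and v with |v| = j such that s = u ⊕ v; and in that case s + j = v ⊕ u. -/
/-- A score sequence: nondecreasing, entries in `[0, n-1]`, prefix sums at least
`binom k 2`, and total sum `binom n 2`. -/
def IsScoreSeq (s : List ℕ) : Prop :=
  s.Pairwise (· ≤ ·) ∧ (∀ x ∈ s, x < s.length) ∧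
    (∀ k, 0 < k → k < s.length → k.choose 2 ≤ (s.take k).sum) ∧
    s.sum = s.length.choose 2

/-- A strong score sequence: nonempty and all proper prefix-sum inequalities strict. -/
def IsStrongScoreSeq (s : List ℕ) : Prop :=
  IsScoreSeq s ∧ s ≠ [] ∧ ∀ k, 0 < k → k < s.length → k.choose 2 < (s.take k).sum

/-- Direct sum of score sequences: concatenate `u` with `v` shifted up by `u.length`. -/
def dsum (u v : List ℕ) : List ℕ := u ++ v.map (· + u.length)

/-- Iterated direct sum of a list of score sequences. -/
def dsumAll (ts : List (List ℕ)) : List ℕ := ts.foldl dsum []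

/-- `s + j`: entries shifted by `j`, reduced modulo the length, sorted nondecreasingly. -/
def shift (s : List ℕ) (j : ℕ) : List ℕ :=
  Multiset.sort ((s.map fun x => (x + j) % s.length : List ℕ) : Multiset ℕ) (· ≤ ·)


lemma choose_two_add (a b : ℕ) : (a + b).choose 2 = a.choose 2 + b.choose 2 + a * b := by
  induction b with
  | zero => simp
  | succ b ih =>
    have h1 : a + (b+1) = (a+b) + 1 := by omega
    rw [h1, Nat.choose_succ_succ, Nat.choose_one_right,
      Nat.choose_succ_succ b, Nat.choose_one_right, Nat.mul_succ]
    simp only [Nat.succ_eq_add_one, Nat.reduceAdd]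
    omega

lemma sum_map_add (l : List ℕ) (c : ℕ) : (l.map (· + c)).sum = l.sum + l.length * c := by
  induction l with
  | nil => simp
  | cons a l ih => simp [ih]; ring

lemma sort_coe_eq_of_sorted (l m : List ℕ) (h : l.Perm m) (hm : m.Pairwise (· ≤ ·)) :
    Multiset.sort (l : Multiset ℕ) (· ≤ ·) = m := by
  apply List.Perm.eq_of_pairwise' (Multiset.pairwise_sort _ _) hm
  have := Multiset.sort_eq (l : Multiset ℕ) (· ≤ ·)
  exact (Multiset.coe_eq_coe.mp this).trans h

lemma length_dsum (u v : List ℕ) : (dsum u v).length = u.length + v.length := by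
  simp [dsum]

lemma sum_dsum (u v : List ℕ) : (dsum u v).sum = u.sum + v.sum + v.length * u.length := by
  simp [dsum, sum_map_add]
  omega

lemma sorted_dsum (u v : List ℕ) (hu : u.Pairwise (· ≤ ·)) (hub : ∀ x ∈ u, x < u.length)
    (hv : v.Pairwise (· ≤ ·)) : (dsum u v).Pairwise (· ≤ ·) := by
  rw [dsum]
  refine List.pairwise_append.mpr ⟨hu, hv.map _ (fun a b h => by omega), ?_⟩
  intro x hx y hy
  simp only [List.mem_map] at hy
  obtain ⟨z, _, rfl⟩ := hy
  have := hub x hx; omega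

lemma prefix_ge_of_scoreSeq {u : List ℕ} (hu : IsScoreSeq u) :
    ∀ m, m ≤ u.length → m.choose 2 ≤ (u.take m).sum := by
  intro m hm
  rcases Nat.eq_zero_or_pos m with rfl | hm0
  · simp
  rcases eq_or_lt_of_le hm with rfl | hlt
  · rw [List.take_length]
    rw [hu.2.2.2]
  · exact hu.2.2.1 m hm0 hlt

lemma dsum_isScoreSeq {u v : List ℕ} (hu : IsScoreSeq u) (hv : IsScoreSeq v) :
    IsScoreSeq (dsum u v) := by
  obtain ⟨hu1, hu2, hu3, hu4⟩ := hu
  obtain ⟨hv1, hv2, hv3, hv4⟩ := hv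
  refine ⟨sorted_dsum u v hu1 hu2 hv1, ?_, ?_, ?_⟩
  · intro x hx
    rw [length_dsum]
    rw [dsum, List.mem_append] at hx
    rcases hx with hx | hx
    · have := hu2 x hx; omega
    · simp only [List.mem_map] at hx
      obtain ⟨z, hz, rfl⟩ := hx
      have := hv2 z hz; omega
  · intro m hm0 hm
    rw [length_dsum] at hm
    rcases le_or_gt m u.length with h | h
    · rw [dsum, List.take_append_of_le_length h]
      exact prefix_ge_of_scoreSeq ⟨hu1, hu2, hu3, hu4⟩ m h
    · obtain ⟨r, rfl⟩ : ∃ r, m = u.length + r := ⟨m - u.length, by omega⟩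
      have hr : r ≤ v.length := by omega
      rw [dsum, List.take_append, List.sum_append, Nat.add_sub_cancel_left,
        List.take_of_length_le (by omega)]
      have h2 : ((v.map (· + u.length)).take r).sum = (v.take r).sum + r * u.length := by
        rw [← List.map_take, sum_map_add, List.length_take, min_eq_left hr]
      rw [h2]
      have h3 := prefix_ge_of_scoreSeq ⟨hv1, hv2, hv3, hv4⟩ r hr
      have h4 := choose_two_add u.length r
      have h5 := Nat.mul_comm u.length r
      omega
  · rw [sum_dsum, length_dsum, hu4, hv4, choose_two_add, Nat.mul_comm]

lemma shift_length (s : List ℕ) (j : ℕ) : (shift s j).length = s.length := by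
  rw [shift, Multiset.length_sort, Multiset.coe_card, List.length_map]

lemma shift_dsum {u v : List ℕ} (hu1 : u.Pairwise (· ≤ ·)) (hu2 : ∀ x ∈ u, x < u.length)
    (hv1 : v.Pairwise (· ≤ ·)) (hv2 : ∀ x ∈ v, x < v.length) (hvne : 1 ≤ v.length) :
    shift (dsum u v) v.length = dsum v u := by
  rw [shift, length_dsum]
  apply sort_coe_eq_of_sorted
  · have hmap : (dsum u v).map (fun x => (x + v.length) % (u.length + v.length))
        = u.map (· + v.length) ++ v := by
      rw [dsum, List.map_append, List.map_map]
      congr 1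
      · apply List.map_congr_left
        intro x hx
        have hxu := hu2 x hx
        exact Nat.mod_eq_of_lt (by omega)
      · conv_rhs => rw [← List.map_id v]
        apply List.map_congr_left
        intro x hx
        have hxv := hv2 x hx
        simp only [Function.comp_apply, id_eq]
        have hre : x + u.length + v.length = x + (u.length + v.length) := by omega
        rw [hre, Nat.add_mod_right]
        exact Nat.mod_eq_of_lt (by omega)
    rw [hmap]
    exact List.perm_append_comm
  · exact sorted_dsum v u hv1 hv2 hu1

lemma sum_map_mod (n j : ℕ) (hj : j ≤ n) (l : List ℕ) (hl : ∀ x ∈ l, x < n) :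
    (l.map fun x => (x + j) % n).sum + n * (l.countP fun x => decide (n - j ≤ x))
      = l.sum + j * l.length := by
  induction l with
  | nil => simp
  | cons a l ih =>
    have ha := hl a (by simp)
    have hrec := ih (fun x hx => hl x (by simp [hx]))
    simp only [List.map_cons, List.sum_cons, List.countP_cons, List.length_cons]
    have hmul1 : j * (l.length + 1) = j * l.length + j := by ring
    have hmul2 : n * ((l.countP fun x => decide (n - j ≤ x)) + 1)
        = n * (l.countP fun x => decide (n - j ≤ x)) + n := by ring
    have hmul3 : n * ((l.countP fun x => decide (n - j ≤ x)) + 0)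
        = n * (l.countP fun x => decide (n - j ≤ x)) := by ring
    by_cases hc : n - j ≤ a
    · have hd : (decide (n - j ≤ a)) = true := by simpa using hc
      rw [hd, if_pos rfl]
      have hm : (a + j) % n = a + j - n := by
        rw [Nat.mod_eq_sub_mod (by omega), Nat.mod_eq_of_lt (by omega)]
      rw [hm]
      omega
    · have hd : (decide (n - j ≤ a)) = false := by simpa using hc
      rw [hd, if_neg (by simp)]
      rw [Nat.mod_eq_of_lt (by omega)]
      omega

/-- `s+j` is a score sequence iff `s = u ⊕ v` with `v` of length `j`;
in that case `s+j = v ⊕ u`. -/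
theorem shift_scoreSeq_iff (s : List ℕ) (hs : IsScoreSeq s) (hne : s ≠ [])
    (j : ℕ) (hj1 : 1 ≤ j) (hj2 : j ≤ s.length - 1) :
    (IsScoreSeq (shift s j) ↔
      ∃ u v, IsScoreSeq u ∧ IsScoreSeq v ∧ v.length = j ∧ s = dsum u v) ∧
    (∀ u v, IsScoreSeq u → IsScoreSeq v → v.length = j → s = dsum u v →
      shift s j = dsum v u) := by
  have hn0 : 0 < s.length := List.length_pos_iff.mpr hne
  have main2 : ∀ u v, IsScoreSeq u → IsScoreSeq v → v.length = j → s = dsum u v →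
      shift s j = dsum v u := by
    intro u v hu hv hvl hsuv
    rw [hsuv, ← hvl]
    exact shift_dsum hu.1 hu.2.1 hv.1 hv.2.1 (by omega)
  refine ⟨⟨?_, ?_⟩, main2⟩
  · -- forward direction
    intro hsh
    obtain ⟨hs1, hs2, hs3, hs4⟩ := hs
    obtain ⟨hh1, hh2, hh3, hh4⟩ := hsh
    set n := s.length with hn
    have hn2 : 2 ≤ n := by omega
    have hjn : j < n := by omega
    set k := n - j with hk
    have hkj : k + j = n := by omega
    have hk1 : 0 < k := by omega
    have hkn : k < n := by omega
    -- count of large entries is j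
    have hshl : (shift s j).length = n := shift_length s j
    have hperm : (shift s j).Perm (s.map fun x => (x + j) % n) := by
      have h := Multiset.sort_eq ((s.map fun x => (x + j) % s.length : List ℕ) : Multiset ℕ) (· ≤ ·)
      exact Multiset.coe_eq_coe.mp h
    have hcount := sum_map_mod n j (le_of_lt hjn) s hs2
    rw [← hk, ← hn] at hcount
    have hsum_sh : (shift s j).sum = (s.map fun x => (x + j) % n).sum := hperm.sum_eq
    have hc : (s.countP fun x => decide (k ≤ x)) = j := by
      have hmsum : (s.map fun x => (x + j) % n).sum = n.choose 2 := by
        rw [← hsum_sh, hh4, hshl]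
      have h1 : n * (s.countP fun x => decide (k ≤ x)) = n * j := by
        have hmc := Nat.mul_comm j n
        omega
      exact Nat.eq_of_mul_eq_mul_left (by omega) h1
    have hsplit : s.take k ++ s.drop k = s := List.take_append_drop k s
    have hcsplit : (s.take k).countP (fun x => decide (k ≤ x))
        + (s.drop k).countP (fun x => decide (k ≤ x)) = s.countP (fun x => decide (k ≤ x)) := by
      rw [← List.countP_append, hsplit]
    have hdl : (s.drop k).length = j := by rw [List.length_drop]; omega
    have htl : (s.take k).length = k := by rw [List.length_take]; omega
    have hcross : ∀ x ∈ s.take k, ∀ y ∈ s.drop k, x ≤ y := by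
      have h : List.Pairwise (· ≤ ·) (s.take k ++ s.drop k) := by rw [hsplit]; exact hs1
      exact (List.pairwise_append.mp h).2.2
    have htake_lt : ∀ x ∈ s.take k, x < k := by
      by_contra hcon
      push_neg at hcon
      obtain ⟨x, hx, hxk⟩ := hcon
      have h6 : (s.drop k).countP (fun x => decide (k ≤ x)) = j := by
        rw [List.countP_eq_length.mpr, hdl]
        intro y hy
        simpa using le_trans hxk (hcross x hx y hy)
      have h7 : 0 < (s.take k).countP (fun x => decide (k ≤ x)) :=
        List.countP_pos_iff.mpr ⟨x, hx, by simpa using hxk⟩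
      omega
    have hdrop_ge : ∀ y ∈ s.drop k, k ≤ y := by
      have h8 : (s.take k).countP (fun x => decide (k ≤ x)) = 0 := by
        rw [List.countP_eq_zero]
        intro a ha
        have := htake_lt a ha
        simp only [decide_eq_true_eq]
        omega
      have h9 : (s.drop k).countP (fun x => decide (k ≤ x)) = (s.drop k).length := by omega
      intro y hy
      have := List.countP_eq_length.mp h9 y hy
      simpa using this
    set u := s.take k with hudef
    set v := (s.drop k).map (· - k) with hvdef
    have hvl : v.length = j := by rw [hvdef, List.length_map, hdl]
    have hul : u.length = k := htl
    have hvmapback : v.map (· + k) = s.drop k := by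
      rw [hvdef, List.map_map]
      conv_rhs => rw [← List.map_id (s.drop k)]
      apply List.map_congr_left
      intro x hx
      have := hdrop_ge x hx
      simp only [Function.comp_apply, id_eq]
      omega
    have hsuv : s = dsum u v := by
      rw [dsum, hul, hvmapback]
      exact hsplit.symm
    have husort : u.Pairwise (· ≤ ·) := hs1.sublist (List.take_sublist _ _)
    have hvsort : v.Pairwise (· ≤ ·) :=
      (hs1.sublist (List.drop_sublist _ _)).map _ (fun a b h => Nat.sub_le_sub_right h k)
    have hubound : ∀ x ∈ u, x < u.length := by
      intro x hx; rw [hul]; exact htake_lt x hx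
    have hvbound : ∀ x ∈ v, x < v.length := by
      intro x hx; rw [hvl]
      rw [hvdef, List.mem_map] at hx
      obtain ⟨z, hz, rfl⟩ := hx
      have h1 := hs2 z (List.mem_of_mem_drop hz)
      have h2 := hdrop_ge z hz
      omega
    have hshift_eq : shift s j = dsum v u := by
      rw [hsuv, ← hvl]
      exact shift_dsum husort hubound hvsort hvbound (by omega)
    -- sums
    have hvsum_ge : j.choose 2 ≤ v.sum := by
      have h := hh3 j hj1 (by omega)
      rw [hshift_eq, dsum, List.take_append_of_le_length (by omega)] at h
      calc j.choose 2 ≤ (v.take j).sum := h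
        _ = v.sum := by rw [← hvl, List.take_length]
    have husum_ge : k.choose 2 ≤ u.sum := hs3 k hk1 hkn
    have hssum : u.sum + (v.sum + j * k) = n.choose 2 := by
      have h1 : s.sum = u.sum + (s.drop k).sum := by
        conv_lhs => rw [← hsplit]
        rw [List.sum_append]
      have h2 : (s.drop k).sum = v.sum + j * k := by
        rw [← hvmapback, sum_map_add, hvl]
      omega
    have hcta : n.choose 2 = k.choose 2 + j.choose 2 + k * j := by
      rw [← hkj]; exact choose_two_add k j
    have hmc := Nat.mul_comm j k
    have husum : u.sum = k.choose 2 := by omega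
    have hvsum : v.sum = j.choose 2 := by omega
    refine ⟨u, v, ⟨husort, hubound, ?_, by rw [hul, husum]⟩,
      ⟨hvsort, hvbound, ?_, by rw [hvl, hvsum]⟩, hvl, hsuv⟩
    · intro m hm0 hm
      rw [hul] at hm
      have htt : u.take m = s.take m := by
        rw [hudef, List.take_take, min_eq_left (le_of_lt hm)]
      rw [htt]
      exact hs3 m hm0 (lt_trans hm hkn)
    · intro m hm0 hm
      rw [hvl] at hm
      have h := hh3 m hm0 (by omega)
      rw [hshift_eq, dsum, List.take_append_of_le_length (by omega)] at h
      exact h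
  · rintro ⟨u, v, hu, hv, hvl, hsuv⟩
    rw [main2 u v hu hv hvl hsuv]
    exact dsum_isScoreSeq hv hu
end

section
/- The number of multisets in EGZ_n that contain at least one zero equals the Catalan number C_{n-1} = binomial(2n-2, n-1)/n. -/
section Aux

variable (n : ℕ)

private lemma sum_map_add_const (c : ZMod n) (M : Multiset (ZMod n)) :
    (M.map (· + c)).sum = M.sum + (Multiset.card M) • c := by
  induction M using Multiset.induction with
  | empty => simp
  | cons a s ih => simp [ih, succ_nsmul]; ring

/-- Shift equiv between fibers of the sum map on `Sym (ZMod n) (n-1)`. -/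
private def shiftEquiv (hn : 1 ≤ n) (s s' : ZMod n) :
    {M : Sym (ZMod n) (n - 1) // (M : Multiset (ZMod n)).sum = s} ≃
    {M : Sym (ZMod n) (n - 1) // (M : Multiset (ZMod n)).sum = s'} := by
  have hcast : ((n - 1 : ℕ) : ZMod n) = -1 := by
    push_cast [Nat.cast_sub hn]
    simp
  have key : ∀ (c : ZMod n) (M : Multiset (ZMod n)), Multiset.card M = n - 1 →
      (M.map (· + c)).sum = M.sum - c := by
    intro c M hM
    rw [sum_map_add_const, hM, nsmul_eq_mul, hcast]
    ring
  refine
    { toFun := fun M => ⟨⟨(M : Multiset (ZMod n)).map (· + (s - s')), by simp [M.1.2]⟩, ?_⟩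
      invFun := fun M => ⟨⟨(M : Multiset (ZMod n)).map (· + (s' - s)), by simp [M.1.2]⟩, ?_⟩
      left_inv := ?_, right_inv := ?_ }
  · obtain ⟨⟨Mm, hM⟩, hs⟩ := M
    simp only [Sym.coe_mk] at hs ⊢
    exact (key (s - s') _ hM).trans (by rw [hs]; ring)
  · obtain ⟨⟨Mm, hM⟩, hs⟩ := M
    simp only [Sym.coe_mk] at hs ⊢
    exact (key (s' - s) _ hM).trans (by rw [hs]; ring)
  · rintro ⟨⟨M, hM⟩, hs⟩
    simp only [Subtype.mk.injEq, Sym.coe_mk]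
    ext : 1
    simp only [Sym.coe_mk, Multiset.map_map, Function.comp_def]
    have : (fun x : ZMod n => x + (s - s') + (s' - s)) = id := by funext x; show _ = x; ring
    simp only [this, Multiset.map_id]
    rfl
  · rintro ⟨⟨M, hM⟩, hs⟩
    simp only [Subtype.mk.injEq, Sym.coe_mk]
    ext : 1
    simp only [Sym.coe_mk, Multiset.map_map, Function.comp_def]
    have : (fun x : ZMod n => x + (s' - s) + (s - s')) = id := by funext x; show _ = x; ring
    simp only [this, Multiset.map_id]
    rfl

end Aux

/-- The number of multisets in `EGZ_n` containing at least one zero is the Catalan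
number `C_{n-1}`. -/
theorem egz_with_zero_card_eq_catalan (n : ℕ) (hn : 1 ≤ n) :
    Nat.card {M : Multiset (ZMod n) //
        Multiset.card M = n ∧ M.sum = (n.choose 2 : ZMod n) ∧ (0 : ZMod n) ∈ M} =
      catalan (n - 1) := by
  haveI : NeZero n := ⟨by omega⟩
  set s₀ : ZMod n := (n.choose 2 : ZMod n) with hs₀
  -- Step 1: equivalence with sum-fiber of Sym (ZMod n) (n-1)
  have e1 : {M : Multiset (ZMod n) //
        Multiset.card M = n ∧ M.sum = s₀ ∧ (0 : ZMod n) ∈ M} ≃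
      {M : Sym (ZMod n) (n - 1) // (M : Multiset (ZMod n)).sum = s₀} := by
    refine
      { toFun := fun M => ⟨⟨M.1.erase 0, ?_⟩, ?_⟩
        invFun := fun M => ⟨0 ::ₘ (M : Multiset (ZMod n)), ?_, ?_, by simp⟩
        left_inv := ?_, right_inv := ?_ }
    · rw [Multiset.card_erase_of_mem M.2.2.2, M.2.1]; rfl
    · have h := Multiset.cons_erase M.2.2.2
      have hsum := M.2.2.1
      rw [← h] at hsum
      simpa using hsum
    · simp [M.1.2]; omega
    · simp [M.2]
    · rintro ⟨M, hM⟩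
      simp only [Subtype.mk.injEq, Sym.coe_mk]
      exact Multiset.cons_erase hM.2.2
    · rintro ⟨⟨M, hM⟩, hs⟩
      simp only [Subtype.mk.injEq, Sym.coe_mk]
      ext : 1
      simp
      rfl
  rw [Nat.card_congr e1, Nat.card_eq_fintype_card]
  -- Step 2: all fibers have the same cardinality
  have hfib : ∀ s : ZMod n,
      Fintype.card {M : Sym (ZMod n) (n - 1) // (M : Multiset (ZMod n)).sum = s} =
      Fintype.card {M : Sym (ZMod n) (n - 1) // (M : Multiset (ZMod n)).sum = s₀} :=
    fun s => Fintype.card_congr (shiftEquiv n hn s s₀)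
  -- Step 3: total count
  have htot : Fintype.card (Sym (ZMod n) (n - 1)) =
      n * Fintype.card {M : Sym (ZMod n) (n - 1) // (M : Multiset (ZMod n)).sum = s₀} := by
    rw [← Fintype.card_congr
      (Equiv.sigmaFiberEquiv (fun M : Sym (ZMod n) (n - 1) => (M : Multiset (ZMod n)).sum)),
      Fintype.card_sigma]
    simp_rw [hfib]
    rw [Finset.sum_const, Finset.card_univ, ZMod.card, smul_eq_mul]
  have hcard : Fintype.card (Sym (ZMod n) (n - 1)) = Nat.centralBinom (n - 1) := by
    rw [Sym.card_sym_eq_choose, ZMod.card, Nat.centralBinom]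
    congr 1
    omega
  have hcat : n * catalan (n - 1) = Nat.centralBinom (n - 1) := by
    have := succ_mul_catalan_eq_centralBinom (n - 1)
    rwa [show n - 1 + 1 = n by omega] at this
  have hmul : n * Fintype.card {M : Sym (ZMod n) (n - 1) // (M : Multiset (ZMod n)).sum = s₀} =
      n * catalan (n - 1) := by rw [← htot, hcard, hcat]
  exact Nat.eq_of_mul_eq_mul_left (by omega) hmul
end
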